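/- arXiv:2311.15346 — 4 statements merged into one kernel-verified Lean document; each statement's English description precedes it below -/
import Mathlib

section
/- Let G = (V,E) be a finite simple graph. For every w ∈ ℝ₊^E, mc(G,w) = max{ wᵀz : z ∈ ℝ₊^E, fcc(G,z) ≤ 1 }, where mc(G,w) := max_{S⊆V} wᵀχ_{δ(S)} and fcc(G,z) := min{ 1ᵀy : y ≥ 0, ∑_S y_S χ_{δ(S)} ≥ z }. -/
open Matrix BigOperators

variable {V : Type*}

/-- The weighted Laplacian `L_G(w) = ∑_{ij ∈ E} w_ij (e_i - e_j)(e_i - e_j)ᵀ`,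
written as a sum over ordered pairs of adjacent vertices (each edge counted twice,
hence the factor 1/2). -/
noncomputable def lap [Fintype V] [DecidableEq V] (G : SimpleGraph V) [DecidableRel G.Adj]
    (w : V → V → ℝ) : Matrix V V ℝ :=
  (1 / 2 : ℝ) • ∑ i : V, ∑ j : V,
    if G.Adj i j then
      w i j • vecMulVec (Pi.single i 1 - Pi.single j 1) (Pi.single i 1 - Pi.single j 1)
    else 0

/-- The adjoint of the Laplacian: `(L_G*(Y))_{ij} = Y_ii + Y_jj - Y_ij - Y_ji`. -/
def lapAdj (Y : Matrix V V ℝ) (i j : V) : ℝ := Y i i + Y j j - Y i j - Y j i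

/-- Inner product of two edge-weight vectors, `wᵀz = ∑_{ij ∈ E} w_ij z_ij`
(sum over ordered pairs, factor 1/2). -/
noncomputable def edgeInner [Fintype V] (G : SimpleGraph V) [DecidableRel G.Adj]
    (w z : V → V → ℝ) : ℝ :=
  (1 / 2 : ℝ) * ∑ i : V, ∑ j : V, if G.Adj i j then w i j * z i j else 0

/-- The 0/1 incidence vector of the cut `δ(S)`, as a function on (ordered) pairs. -/
def cutInd [DecidableEq V] (G : SimpleGraph V) [DecidableRel G.Adj] (S : Finset V)
    (i j : V) : ℝ :=
  if G.Adj i j ∧ ¬ ((i ∈ S) ↔ (j ∈ S)) then 1 else 0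

/-- The maximum cut value `mc(G, w) = max_{S ⊆ V} wᵀ χ_{δ(S)}`. -/
noncomputable def mcVal [Fintype V] [DecidableEq V] (G : SimpleGraph V) [DecidableRel G.Adj]
    (w : V → V → ℝ) : ℝ :=
  ⨆ S : Finset V, edgeInner G w (cutInd G S)

/-- The fractional cut-covering value
`fcc(G, z) = min { 1ᵀy : y ≥ 0, ∑_S y_S χ_{δ(S)} ≥ z }`. -/
noncomputable def fccVal [Fintype V] [DecidableEq V] (G : SimpleGraph V) [DecidableRel G.Adj]
    (z : V → V → ℝ) : ℝ :=
  sInf { t : ℝ | ∃ y : Finset V → ℝ, (∀ S, 0 ≤ y S) ∧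
    (∀ i j, G.Adj i j → z i j ≤ ∑ S : Finset V, y S * cutInd G S i j) ∧
    t = ∑ S : Finset V, y S }

/-- The SDP value
`GW°(G, z) = inf { μ ≥ 0 : Y PSD, diag Y = μ·1, (1/4)L_G*(Y) ≥ z }`. -/
noncomputable def GWpolar [Fintype V] [DecidableEq V] (G : SimpleGraph V) [DecidableRel G.Adj]
    (z : V → V → ℝ) : ℝ :=
  sInf { μ : ℝ | 0 ≤ μ ∧ ∃ Y : Matrix V V ℝ, Y.PosSemidef ∧ (∀ i, Y i i = μ) ∧
    ∀ i j, G.Adj i j → z i j ≤ (1 / 4 : ℝ) * lapAdj Y i j }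

set_option linter.unusedSectionVars false

section aux
variable [Fintype V] [DecidableEq V] (G : SimpleGraph V) [DecidableRel G.Adj]

lemma cutInd_nonneg (S : Finset V) (i j : V) : 0 ≤ cutInd G S i j := by
  unfold cutInd; split_ifs <;> norm_num

lemma cutInd_symm (S : Finset V) (i j : V) : cutInd G S i j = cutInd G S j i := by
  unfold cutInd
  apply if_congr _ rfl rfl
  rw [G.adj_comm]
  tauto

lemma edgeInner_le_mc (w : V → V → ℝ) (S : Finset V) :
    edgeInner G w (cutInd G S) ≤ mcVal G w := by
  unfold mcVal
  exact le_ciSup (f := fun S => edgeInner G w (cutInd G S))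
    (Set.Finite.bddAbove (Set.finite_range _)) S

lemma mc_nonneg (w : V → V → ℝ) : 0 ≤ mcVal G w := by
  have h : edgeInner G w (cutInd G (∅ : Finset V)) = 0 := by
    unfold edgeInner cutInd; simp
  calc (0:ℝ) = edgeInner G w (cutInd G (∅ : Finset V)) := h.symm
    _ ≤ _ := edgeInner_le_mc G w ∅

private lemma swap3 (f : V → V → Finset V → ℝ) :
    ∑ i : V, ∑ j : V, ∑ S : Finset V, f i j S
      = ∑ S : Finset V, ∑ i : V, ∑ j : V, f i j S := by
  calc ∑ i : V, ∑ j : V, ∑ S : Finset V, f i j S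
      = ∑ i : V, ∑ S : Finset V, ∑ j : V, f i j S :=
        Finset.sum_congr rfl fun i _ => Finset.sum_comm
    _ = ∑ S : Finset V, ∑ i : V, ∑ j : V, f i j S := Finset.sum_comm

lemma key_le (w z : V → V → ℝ) (hwnn : ∀ i j, G.Adj i j → 0 ≤ w i j)
    (y : Finset V → ℝ) (hy : ∀ S, 0 ≤ y S)
    (hz : ∀ i j, G.Adj i j → z i j ≤ ∑ S : Finset V, y S * cutInd G S i j) :
    edgeInner G w z ≤ (∑ S : Finset V, y S) * mcVal G w := by
  have e1 : ∀ i j : V,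
      (if G.Adj i j then w i j * ∑ S : Finset V, y S * cutInd G S i j else 0)
      = ∑ S : Finset V, (if G.Adj i j then y S * (w i j * cutInd G S i j) else 0) := by
    intro i j; split_ifs with h
    · rw [Finset.mul_sum]; exact Finset.sum_congr rfl fun S _ => by ring
    · simp
  have e2 : ∀ S, y S * edgeInner G w (cutInd G S)
      = (1/2 : ℝ) * ∑ i : V, ∑ j : V,
          (if G.Adj i j then y S * (w i j * cutInd G S i j) else 0) := by
    intro S
    unfold edgeInner
    rw [mul_left_comm]
    congr 1
    rw [Finset.mul_sum]
    refine Finset.sum_congr rfl fun i _ => ?_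
    rw [Finset.mul_sum]
    refine Finset.sum_congr rfl fun j _ => ?_
    split_ifs <;> ring
  have rhs : ∑ S : Finset V, y S * edgeInner G w (cutInd G S)
      = (1/2 : ℝ) * ∑ i : V, ∑ j : V,
          (if G.Adj i j then w i j * ∑ S : Finset V, y S * cutInd G S i j else 0) := by
    simp only [e2, e1]
    rw [← Finset.mul_sum, swap3]
  have step1 : edgeInner G w z ≤
      ∑ S : Finset V, y S * edgeInner G w (cutInd G S) := by
    rw [rhs]
    unfold edgeInner
    apply mul_le_mul_of_nonneg_left _ (by norm_num)
    refine Finset.sum_le_sum fun i _ => Finset.sum_le_sum fun j _ => ?_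
    split_ifs with h
    · exact mul_le_mul_of_nonneg_left (hz i j h) (hwnn i j h)
    · exact le_refl 0
  calc edgeInner G w z ≤ ∑ S : Finset V, y S * edgeInner G w (cutInd G S) := step1
    _ ≤ ∑ S : Finset V, y S * mcVal G w :=
        Finset.sum_le_sum fun S _ =>
          mul_le_mul_of_nonneg_left (edgeInner_le_mc G w S) (hy S)
    _ = (∑ S : Finset V, y S) * mcVal G w := by rw [Finset.sum_mul]

/-- The feasible set of the fcc LP. -/
def fccSet (z : V → V → ℝ) : Set ℝ :=
  { t : ℝ | ∃ y : Finset V → ℝ, (∀ S, 0 ≤ y S) ∧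
    (∀ i j, G.Adj i j → z i j ≤ ∑ S : Finset V, y S * cutInd G S i j) ∧
    t = ∑ S : Finset V, y S }

lemma fccSet_bddBelow (z : V → V → ℝ) : BddBelow (fccSet G z) := by
  refine ⟨0, ?_⟩
  rintro t ⟨y, hy, -, rfl⟩
  exact Finset.sum_nonneg fun S _ => hy S

lemma fccSet_nonempty (z : V → V → ℝ) : (fccSet G z).Nonempty := by
  set B : ℝ := ∑ i : V, ∑ j : V, max (z i j) 0 with hB
  have hB0 : 0 ≤ B := Finset.sum_nonneg fun i _ =>
    Finset.sum_nonneg fun j _ => le_max_right _ _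
  refine ⟨∑ S : Finset V, B, fun _ => B, fun _ => hB0, ?_, rfl⟩
  intro i j hij
  have hne : i ≠ j := G.ne_of_adj hij
  have h1 : cutInd G {i} i j = 1 := by
    unfold cutInd
    rw [if_pos]
    refine ⟨hij, ?_⟩
    simp [hne.symm]
  have hsingle : B * cutInd G {i} i j ≤ ∑ S : Finset V, B * cutInd G S i j :=
    Finset.single_le_sum (f := fun S => B * cutInd G S i j)
      (fun S _ => mul_nonneg hB0 (cutInd_nonneg G S i j)) (Finset.mem_univ _)
  have hzB : z i j ≤ B := by
    have h2 : max (z i j) 0 ≤ ∑ j' : V, max (z i j') 0 :=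
      Finset.single_le_sum (f := fun j' => max (z i j') 0)
        (fun j' _ => le_max_right _ _) (Finset.mem_univ j)
    have h3 : ∑ j' : V, max (z i j') 0 ≤ B :=
      Finset.single_le_sum (f := fun i' => ∑ j' : V, max (z i' j') 0)
        (fun i' _ => Finset.sum_nonneg fun j' _ => le_max_right _ _) (Finset.mem_univ i)
    exact le_trans (le_max_left _ _) (le_trans h2 h3)
  calc z i j ≤ B := hzB
    _ = B * cutInd G {i} i j := by rw [h1, mul_one]
    _ ≤ _ := hsingle

lemma fccVal_eq (z : V → V → ℝ) : fccVal G z = sInf (fccSet G z) := rfl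

end aux

/-- `mc(G,·)` is the gauge dual of `fcc(G,·)`:
`mc(G,w) = max { wᵀz : z ≥ 0, fcc(G,z) ≤ 1 }`. -/
theorem mc_as_polar [Fintype V] [DecidableEq V] (G : SimpleGraph V) [DecidableRel G.Adj]
    (w : V → V → ℝ) (hwsym : ∀ i j, w i j = w j i)
    (hwnn : ∀ i j, G.Adj i j → 0 ≤ w i j) :
    mcVal G w = sSup { t : ℝ | ∃ z : V → V → ℝ, (∀ i j, z i j = z j i) ∧
      (∀ i j, G.Adj i j → 0 ≤ z i j) ∧ fccVal G z ≤ 1 ∧ t = edgeInner G w z } := by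
  set A := { t : ℝ | ∃ z : V → V → ℝ, (∀ i j, z i j = z j i) ∧
      (∀ i j, G.Adj i j → 0 ≤ z i j) ∧ fccVal G z ≤ 1 ∧ t = edgeInner G w z } with hA
  -- every element of A is at most mcVal
  have hbound : ∀ t ∈ A, t ≤ mcVal G w := by
    rintro t ⟨z, hzsym, hznn, hfcc, rfl⟩
    have hkey : ∀ t' ∈ fccSet G z, edgeInner G w z ≤ t' * mcVal G w := by
      rintro t' ⟨y, hy, hz, rfl⟩
      exact key_le G w z hwnn y hy hz
    obtain ⟨t0, ht0⟩ := fccSet_nonempty G z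
    by_cases hmc : mcVal G w = 0
    · have := hkey t0 ht0
      rw [hmc, mul_zero] at this
      rw [hmc]; exact this
    · have hpos : 0 < mcVal G w := lt_of_le_of_ne (mc_nonneg G w) (Ne.symm hmc)
      have hdiv : edgeInner G w z / mcVal G w ≤ fccVal G z := by
        rw [fccVal_eq]
        refine le_csInf ⟨t0, ht0⟩ fun t' ht' => ?_
        rw [div_le_iff₀ hpos]
        exact hkey t' ht'
      have h1 : edgeInner G w z / mcVal G w ≤ 1 := le_trans hdiv hfcc
      calc edgeInner G w z = (edgeInner G w z / mcVal G w) * mcVal G w := by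
            field_simp
        _ ≤ 1 * mcVal G w := mul_le_mul_of_nonneg_right h1 (le_of_lt hpos)
        _ = mcVal G w := one_mul _
  have hbdd : BddAbove A := ⟨mcVal G w, hbound⟩
  -- A is nonempty : 0 ∈ A
  have hmemzero : (0:ℝ) ∈ A := by
    refine ⟨fun _ _ => 0, fun _ _ => rfl, fun _ _ _ => le_refl 0, ?_, by
      unfold edgeInner; simp⟩
    rw [fccVal_eq]
    have h0 : (0:ℝ) ∈ fccSet G (fun _ _ => (0:ℝ)) := by
      refine ⟨fun _ => 0, fun _ => le_refl 0, fun i j _ => ?_, by simp⟩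
      simp
    exact le_trans (csInf_le (fccSet_bddBelow G _) h0) (by norm_num)
  apply le_antisymm
  · -- mcVal ≤ sSup A
    unfold mcVal
    refine ciSup_le fun S => ?_
    refine le_csSup hbdd ?_
    refine ⟨cutInd G S, cutInd_symm G S, fun i j _ => cutInd_nonneg G S i j, ?_, rfl⟩
    rw [fccVal_eq]
    have hmem : (1:ℝ) ∈ fccSet G (cutInd G S) := by
      refine ⟨fun T => if T = S then 1 else 0, fun T => by positivity, fun i j _ => ?_, ?_⟩
      · have : ∑ T : Finset V, (if T = S then (1:ℝ) else 0) * cutInd G T i j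
            = cutInd G S i j := by
          rw [Finset.sum_eq_single S]
          · simp
          · intro T _ hT; simp [hT]
          · intro h; exact absurd (Finset.mem_univ S) h
        rw [this]
      · simp
    exact csInf_le (fccSet_bddBelow G _) hmem
  · exact csSup_le ⟨0, hmemzero⟩ hbound
end

section
/- Let G = (V,E) be a finite simple graph and z ∈ ℝ₊^E. For each edge ij ∈ E, the pair (w,x) = (e_{ij}, (1/2)(e_i + e_j)) satisfies Diag(x) - (1/4)L_G(e_{ij}) positive semidefinite and 1ᵀx ≤ 1; consequently z_{ij} ≤ GW^∘(G,z) for every ij ∈ E, i.e., ‖z‖_∞ ≤ GW^∘(G,z). -/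
open Matrix BigOperators

variable {V : Type*}

section AuxGWpolar
variable {V : Type*} [Fintype V] [DecidableEq V]

private lemma auxGW_sum_pair_matrix {M : Type*} [AddCommMonoid M] {i j : V} (hij : i ≠ j)
    (f : V → V → M) :
    ∑ p : V, ∑ q : V, (if (p = i ∧ q = j) ∨ (p = j ∧ q = i) then f p q else 0)
      = f i j + f j i := by
  have : ∀ p q : V, (if (p = i ∧ q = j) ∨ (p = j ∧ q = i) then f p q else 0)
      = (if p = i ∧ q = j then f p q else 0) + (if p = j ∧ q = i then f p q else 0) := by
    intro p q
    by_cases h1 : p = i ∧ q = j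
    · have h2 : ¬(p = j ∧ q = i) := fun h => hij (h1.1.symm.trans h.1)
      simp [h1, h2, hij, hij.symm]
    · by_cases h2 : p = j ∧ q = i <;> simp [h1, h2, hij, hij.symm]
  simp_rw [this, Finset.sum_add_distrib, ite_and]
  simp

private lemma auxGW_lap_edge (G : SimpleGraph V) [DecidableRel G.Adj] {i j : V} (h : G.Adj i j) :
    lap G (fun a c => if (a = i ∧ c = j) ∨ (a = j ∧ c = i) then (1:ℝ) else 0)
      = vecMulVec (Pi.single i 1 - Pi.single j 1) (Pi.single i 1 - Pi.single j 1) := by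
  have hij : i ≠ j := h.ne
  unfold lap
  have hterm : ∀ p q : V,
      (if G.Adj p q then
        (if (p = i ∧ q = j) ∨ (p = j ∧ q = i) then (1:ℝ) else 0) •
          vecMulVec (Pi.single p 1 - Pi.single q 1) (Pi.single p (1:ℝ) - Pi.single q 1)
      else 0)
      = (if (p = i ∧ q = j) ∨ (p = j ∧ q = i) then
          vecMulVec (Pi.single p 1 - Pi.single q 1) (Pi.single p (1:ℝ) - Pi.single q 1)
        else (0 : Matrix V V ℝ)) := by
    intro p q
    by_cases hP : (p = i ∧ q = j) ∨ (p = j ∧ q = i)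
    · have hadj : G.Adj p q := by
        rcases hP with ⟨hp, hq⟩ | ⟨hp, hq⟩
        · subst hp; subst hq; exact h
        · subst hp; subst hq; exact h.symm
      simp [hadj, hP]
    · by_cases hadj : G.Adj p q <;> simp [hadj, hP]
  simp_rw [hterm]
  rw [auxGW_sum_pair_matrix hij]
  have : vecMulVec (Pi.single j 1 - Pi.single i 1 : V → ℝ) (Pi.single j 1 - Pi.single i 1)
      = vecMulVec (Pi.single i 1 - Pi.single j 1 : V → ℝ) (Pi.single i 1 - Pi.single j 1) := by
    ext a b
    simp [vecMulVec_apply]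
    ring
  rw [this]
  ext a b
  simp [vecMulVec_apply]
  ring

private lemma auxGW_key_identity {i j : V} (hij : i ≠ j) :
    (Matrix.diagonal
        (fun v => (1 / 2 : ℝ) * ((if v = i then (1 : ℝ) else 0) + (if v = j then 1 else 0))) -
      (1 / 4 : ℝ) • vecMulVec (Pi.single i 1 - Pi.single j 1 : V → ℝ)
        (Pi.single i 1 - Pi.single j 1))
    = (1 / 4 : ℝ) • vecMulVec
        (fun v => (if v = i then (1:ℝ) else 0) + (if v = j then 1 else 0))
        (fun v => (if v = i then (1:ℝ) else 0) + (if v = j then 1 else 0)) := by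
  ext a b
  simp only [Matrix.sub_apply, Matrix.smul_apply, Matrix.diagonal_apply, vecMulVec_apply,
    Pi.sub_apply, Pi.single_apply, smul_eq_mul]
  by_cases hab : a = b <;>
    by_cases ha : a = i <;> by_cases hb : b = i <;> by_cases ha' : a = j <;>
      by_cases hb' : b = j <;> simp_all <;> ring

private lemma auxGW_psd_smul_vecMulVec (c : ℝ) (hc : 0 ≤ c) (s : V → ℝ) :
    (c • vecMulVec s s).PosSemidef := by
  refine Matrix.PosSemidef.of_dotProduct_mulVec_nonneg ?_ ?_
  · ext a b
    simp [vecMulVec_apply, mul_comm]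
  · intro x
    have hmv : (vecMulVec s s) *ᵥ x = (s ⬝ᵥ x) • s := by
      ext a
      simp only [mulVec, vecMulVec_apply, dotProduct, Pi.smul_apply, smul_eq_mul,
        Finset.sum_mul, Finset.mul_sum]
      exact Finset.sum_congr rfl fun b _ => by ring
    rw [smul_mulVec, hmv]
    simp only [star_trivial, dotProduct_smul, smul_eq_mul]
    rw [dotProduct_comm]
    have : s ⬝ᵥ x * (s ⬝ᵥ x) ≥ 0 := mul_self_nonneg _
    nlinarith

private lemma auxGW_sum_pair (i j : V) (f : V → ℝ) :
    ∑ b : V, f b * ((if b = i then (1:ℝ) else 0) + (if b = j then 1 else 0)) = f i + f j := by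
  simp [mul_add, Finset.sum_add_distrib, mul_ite]

private lemma auxGW_le_GW (G : SimpleGraph V) [DecidableRel G.Adj] (z : V → V → ℝ)
    {i j : V} (hadj : G.Adj i j) : z i j ≤ GWpolar G z := by
  have hij : i ≠ j := hadj.ne
  apply le_csInf
  · set μ₀ : ℝ := 2 * ∑ a : V, ∑ b : V, |z a b| with hμ₀
    have hsum_nn : (0:ℝ) ≤ ∑ a : V, ∑ b : V, |z a b| :=
      Finset.sum_nonneg fun a _ => Finset.sum_nonneg fun b _ => abs_nonneg _
    have hle : ∀ a b : V, z a b ≤ ∑ a : V, ∑ b : V, |z a b| := by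
      intro a b
      calc z a b ≤ |z a b| := le_abs_self _
        _ ≤ ∑ b : V, |z a b| :=
            Finset.single_le_sum (fun c _ => abs_nonneg (z a c)) (Finset.mem_univ b)
        _ ≤ ∑ a : V, ∑ b : V, |z a b| :=
            Finset.single_le_sum (f := fun a => ∑ b : V, |z a b|)
              (fun c _ => Finset.sum_nonneg fun b _ => abs_nonneg _) (Finset.mem_univ a)
    refine ⟨μ₀, by positivity, Matrix.diagonal (fun _ => μ₀), ?_, ?_, ?_⟩
    · exact Matrix.PosSemidef.diagonal fun _ => by positivity
    · intro v; simp
    · intro a b hab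
      have hne : a ≠ b := hab.ne
      simp only [lapAdj, Matrix.diagonal_apply_eq, Matrix.diagonal_apply_ne _ hne,
        Matrix.diagonal_apply_ne _ hne.symm]
      have := hle a b
      rw [hμ₀]; linarith
  · rintro μ ⟨hμ, Y, hY, hdiag, hfeas⟩
    have hz := hfeas i j hadj
    set x : V → ℝ := fun v => (if v = i then (1:ℝ) else 0) + (if v = j then 1 else 0) with hx
    have hq := hY.dotProduct_mulVec_nonneg x
    have hmv : ∀ a : V, (Y *ᵥ x) a = Y a i + Y a j := by
      intro a
      simp only [Matrix.mulVec, dotProduct, hx]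
      exact auxGW_sum_pair i j (Y a)
    have hval : star x ⬝ᵥ (Y *ᵥ x) = Y i i + Y i j + (Y j i + Y j j) := by
      simp only [star_trivial, dotProduct]
      have hc : ∀ a : V, x a * (Y *ᵥ x) a = (Y *ᵥ x) a * x a := fun a => mul_comm _ _
      simp_rw [hc]
      rw [auxGW_sum_pair i j (Y *ᵥ x), hmv i, hmv j]
    rw [hval] at hq
    have h1 : Y i i = μ := hdiag i
    have h2 : Y j j = μ := hdiag j
    have : (1/4 : ℝ) * lapAdj Y i j ≤ μ := by
      simp only [lapAdj, h1, h2] at *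
      linarith
    linarith

end AuxGWpolar

/-- For each edge `ij`, the pair `(w, x) = (e_{ij}, (1/2)(e_i + e_j))` is dual feasible;
consequently `z_{ij} ≤ GW°(G,z)` for every edge `ij`, i.e. `‖z‖_∞ ≤ GW°(G,z)`. -/
theorem norm_infty_le_GWpolar [Fintype V] [DecidableEq V] (G : SimpleGraph V)
    [DecidableRel G.Adj] (z : V → V → ℝ) (hzsym : ∀ i j, z i j = z j i)
    (hznn : ∀ i j, G.Adj i j → 0 ≤ z i j) :
    ∀ i j, G.Adj i j →
      (Matrix.diagonal
          (fun v => (1 / 2 : ℝ) * ((if v = i then (1 : ℝ) else 0) + (if v = j then 1 else 0))) -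
        (1 / 4 : ℝ) • lap G
          (fun a c => if (a = i ∧ c = j) ∨ (a = j ∧ c = i) then 1 else 0)).PosSemidef ∧
      (∑ v : V, (1 / 2 : ℝ) * ((if v = i then (1 : ℝ) else 0) + (if v = j then 1 else 0))) ≤ 1 ∧
      z i j ≤ GWpolar G z := by
  intro i j hadj
  have hij : i ≠ j := hadj.ne
  refine ⟨?_, ?_, auxGW_le_GW G z hadj⟩
  · rw [auxGW_lap_edge G hadj, auxGW_key_identity hij]
    exact auxGW_psd_smul_vecMulVec _ (by norm_num) _
  · rw [← Finset.mul_sum]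
    simp [Finset.sum_add_distrib, hij]
    norm_num
end

section
/- Let G = (V,E) be a finite simple graph and y ∈ ℝ₊^{P(V)} a fractional cut cover of (G, z), i.e., ∑_{S⊆V} y_S χ_{δ(S)} ≥ z. Then the pair (μ, Y) := (1ᵀy, ∑_{S⊆V} y_S (1 − 2χ_S)(1 − 2χ_S)ᵀ) satisfies: Y is positive semidefinite, diag(Y) = μ·1, and (1/4)L_G*(Y) ≥ z. Consequently GW^∘(G,z) ≤ fcc(G,z). -/
open Matrix BigOperators

variable {V : Type*}

lemma feasAux [Fintype V] [DecidableEq V] (G : SimpleGraph V) [DecidableRel G.Adj]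
    (z : V → V → ℝ) (y : Finset V → ℝ) (hy : ∀ S, 0 ≤ y S)
    (hcov : ∀ i j, G.Adj i j → z i j ≤ ∑ S : Finset V, y S * cutInd G S i j) :
    (∑ S : Finset V, y S •
        vecMulVec (fun v => 1 - 2 * (if v ∈ S then (1 : ℝ) else 0))
          (fun v => 1 - 2 * (if v ∈ S then (1 : ℝ) else 0))).PosSemidef ∧
    (∀ i, (∑ S : Finset V, y S •
        vecMulVec (fun v => 1 - 2 * (if v ∈ S then (1 : ℝ) else 0))
          (fun v => 1 - 2 * (if v ∈ S then (1 : ℝ) else 0))) i i = ∑ S : Finset V, y S) ∧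
    (∀ i j, G.Adj i j → z i j ≤ (1 / 4 : ℝ) *
      lapAdj (∑ S : Finset V, y S •
        vecMulVec (fun v => 1 - 2 * (if v ∈ S then (1 : ℝ) else 0))
          (fun v => 1 - 2 * (if v ∈ S then (1 : ℝ) else 0))) i j) := by
  simp only [cutInd] at hcov
  simp only [lapAdj]
  set u : Finset V → V → ℝ := fun S v => 1 - 2 * (if v ∈ S then (1:ℝ) else 0) with hu
  have hentry : ∀ i j, (∑ S : Finset V, y S • vecMulVec (u S) (u S)) i j
      = ∑ S : Finset V, y S * (u S i * u S j) := by
    intro i j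
    simp [Matrix.sum_apply, vecMulVec_apply]
  have husq : ∀ S v, u S v * u S v = 1 := by
    intro S v; simp only [hu]; split <;> norm_num
  refine ⟨?_, ?_, ?_⟩
  · refine Matrix.PosSemidef.of_dotProduct_mulVec_nonneg ?_ ?_
    · apply Matrix.IsHermitian.ext
      intro i j
      simp only [star_trivial]
      rw [hentry, hentry]
      exact Finset.sum_congr rfl fun S _ => by ring
    · intro x
      have : ∀ i, ((∑ S : Finset V, y S • vecMulVec (u S) (u S)) *ᵥ x) i
          = ∑ S : Finset V, y S * u S i * (∑ j, u S j * x j) := by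
        intro i
        simp only [mulVec, dotProduct, hentry, Finset.sum_mul, Finset.mul_sum]
        rw [Finset.sum_comm]
        exact Finset.sum_congr rfl fun S _ => Finset.sum_congr rfl fun j _ => by ring
      rw [show (∑ S : Finset V, y S • vecMulVec (fun v => 1 - 2 * (if v ∈ S then (1 : ℝ) else 0)) (fun v => 1 - 2 * (if v ∈ S then (1 : ℝ) else 0))) = ∑ S : Finset V, y S • vecMulVec (u S) (u S) from rfl]
      simp only [dotProduct, this, star_trivial, Finset.mul_sum]
      rw [Finset.sum_comm]
      apply Finset.sum_nonneg
      intro S _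
      have h1 : ∑ i : V, ∑ j : V, x i * (y S * u S i * (u S j * x j))
          = y S * ((∑ j : V, u S j * x j) * (∑ j : V, u S j * x j)) := by
        rw [Finset.sum_mul_sum, Finset.mul_sum]
        refine Finset.sum_congr rfl fun i _ => ?_
        rw [Finset.mul_sum]
        exact Finset.sum_congr rfl fun j _ => by ring
      rw [h1]
      exact mul_nonneg (hy S) (mul_self_nonneg _)
  · intro i
    rw [hentry]
    exact Finset.sum_congr rfl fun S _ => by rw [husq, mul_one]
  · intro i j hij
    have := hcov i j hij
    refine le_trans this (le_of_eq ?_)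
    rw [show (∑ S : Finset V, y S • vecMulVec (fun v => 1 - 2 * (if v ∈ S then (1 : ℝ) else 0)) (fun v => 1 - 2 * (if v ∈ S then (1 : ℝ) else 0))) = ∑ S : Finset V, y S • vecMulVec (u S) (u S) from rfl]
    simp only [hentry]
    simp only [← Finset.sum_add_distrib, ← Finset.sum_sub_distrib, Finset.mul_sum]
    apply Finset.sum_congr rfl
    intro S _
    rw [husq, husq]
    simp only [hu, hij, true_and]
    by_cases hi : i ∈ S <;> by_cases hj : j ∈ S <;> simp [hi, hj] <;> ring

/-- From a fractional cut cover `y` of `(G, z)`, the pair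
`(μ, Y) = (1ᵀy, ∑_S y_S (1 − 2χ_S)(1 − 2χ_S)ᵀ)` is feasible for the SDP defining `GW°`;
consequently `GW°(G,z) ≤ fcc(G,z)`. -/
theorem GWpolar_le_fcc [Fintype V] [DecidableEq V] (G : SimpleGraph V) [DecidableRel G.Adj]
    (z : V → V → ℝ) (y : Finset V → ℝ) (hy : ∀ S, 0 ≤ y S)
    (hcov : ∀ i j, G.Adj i j → z i j ≤ ∑ S : Finset V, y S * cutInd G S i j) :
    (∑ S : Finset V, y S •
        vecMulVec (fun v => 1 - 2 * (if v ∈ S then (1 : ℝ) else 0))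
          (fun v => 1 - 2 * (if v ∈ S then (1 : ℝ) else 0))).PosSemidef ∧
    (∀ i, (∑ S : Finset V, y S •
        vecMulVec (fun v => 1 - 2 * (if v ∈ S then (1 : ℝ) else 0))
          (fun v => 1 - 2 * (if v ∈ S then (1 : ℝ) else 0))) i i = ∑ S : Finset V, y S) ∧
    (∀ i j, G.Adj i j → z i j ≤ (1 / 4 : ℝ) *
      lapAdj (∑ S : Finset V, y S •
        vecMulVec (fun v => 1 - 2 * (if v ∈ S then (1 : ℝ) else 0))
          (fun v => 1 - 2 * (if v ∈ S then (1 : ℝ) else 0))) i j) ∧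
    GWpolar G z ≤ fccVal G z := by
  obtain ⟨h1, h2, h3⟩ := feasAux G z y hy hcov
  refine ⟨h1, h2, h3, ?_⟩
  apply csInf_le_csInf
  · exact ⟨0, fun t ht => ht.1⟩
  · exact ⟨∑ S : Finset V, y S, y, hy, hcov, rfl⟩
  · rintro t ⟨y', hy', hcov', rfl⟩
    obtain ⟨g1, g2, g3⟩ := feasAux G z y' hy' hcov'
    exact ⟨Finset.sum_nonneg fun S _ => hy' S, _, g1, g2, g3⟩
end

section
/- Let G = (V,E) be a finite simple graph, t > 1 a real number, and f : V → ℝ^d a vector t-coloring, meaning ‖f(i)‖ = 1 for all i ∈ V and (t−1)·⟨f(i), f(j)⟩ ≤ −1 for every edge ij ∈ E. Define μ := 2(1 − 1/t) and Y_{ij} := μ·⟨f(i), f(j)⟩. Then Y is positive semidefinite, diag(Y) = μ·1, and (1/4)(L_G*(Y))_{ij} ≥ 1 for every edge ij; hence GW^∘(G, 1) ≤ 2(1 − 1/t). -/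
open Matrix BigOperators

variable {V : Type*}

/-- From a vector `t`-coloring `f` of `G`, the matrix `Y_{ij} = 2(1 − 1/t)⟨f(i), f(j)⟩`
is feasible for the SDP defining `GW°(G, 1)`; hence `GW°(G, 1) ≤ 2(1 − 1/t)`. -/
theorem GWpolar_le_of_vector_coloring [Fintype V] [DecidableEq V] (G : SimpleGraph V)
    [DecidableRel G.Adj] (t : ℝ) (ht : 1 < t) (d : ℕ) (f : V → Fin d → ℝ)
    (hunit : ∀ i, ∑ k, f i k * f i k = 1)
    (hcol : ∀ i j, G.Adj i j → (t - 1) * (∑ k, f i k * f j k) ≤ -1) :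
    (Matrix.of (fun i j => 2 * (1 - 1 / t) * ∑ k, f i k * f j k) : Matrix V V ℝ).PosSemidef ∧
    (∀ i, (Matrix.of (fun i j => 2 * (1 - 1 / t) * ∑ k, f i k * f j k) : Matrix V V ℝ) i i
        = 2 * (1 - 1 / t)) ∧
    (∀ i j, G.Adj i j → (1 : ℝ) ≤ (1 / 4 : ℝ) *
      lapAdj (Matrix.of (fun i j => 2 * (1 - 1 / t) * ∑ k, f i k * f j k) : Matrix V V ℝ) i j) ∧
    GWpolar G (fun _ _ => 1) ≤ 2 * (1 - 1 / t) := by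
  set μ : ℝ := 2 * (1 - 1 / t) with hμdef
  have ht0 : (0:ℝ) < t := lt_trans one_pos ht
  have hμ0 : 0 ≤ μ := by
    have : 1 / t < 1 := by
      rw [div_lt_one ht0]; exact ht
    have : 0 ≤ 1 - 1/t := by linarith
    positivity
  set Y : Matrix V V ℝ := Matrix.of (fun i j => 2 * (1 - 1 / t) * ∑ k, f i k * f j k) with hY
  have hYapp : ∀ i j, Y i j = μ * ∑ k, f i k * f j k := fun i j => rfl
  have hpsd : Y.PosSemidef := by
    have : Y = (Matrix.of (fun i k => Real.sqrt μ * f i k) : Matrix V (Fin d) ℝ) *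
        (Matrix.of (fun i k => Real.sqrt μ * f i k) : Matrix V (Fin d) ℝ)ᴴ := by
      ext i j
      simp only [Matrix.mul_apply, Matrix.conjTranspose_apply, Matrix.of_apply, star_trivial,
        hYapp, Finset.mul_sum]
      refine Finset.sum_congr rfl fun k _ => ?_
      have hs : Real.sqrt μ * Real.sqrt μ = μ := Real.mul_self_sqrt hμ0
      have h2 : Real.sqrt μ * f i k * (Real.sqrt μ * f j k)
          = (Real.sqrt μ * Real.sqrt μ) * (f i k * f j k) := by ring
      rw [h2, hs]
    rw [this]
    exact Matrix.posSemidef_self_mul_conjTranspose _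
  have hdiag : ∀ i, Y i i = μ := by
    intro i; rw [hYapp, hunit, mul_one]
  have hedge : ∀ i j, G.Adj i j → (1:ℝ) ≤ (1/4 : ℝ) * lapAdj Y i j := by
    intro i j hij
    have hip : (∑ k, f i k * f j k) ≤ -1 / (t - 1) := by
      have h1 := hcol i j hij
      have ht1 : 0 < t - 1 := by linarith
      rw [le_div_iff₀ ht1]
      linarith [h1]
    have hsym : (∑ k, f j k * f i k) = ∑ k, f i k * f j k := by
      refine Finset.sum_congr rfl fun k _ => mul_comm _ _
    have : lapAdj Y i j = 2 * μ - 2 * μ * ∑ k, f i k * f j k := by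
      simp only [lapAdj, hYapp, hunit, hsym]; ring
    rw [this]
    have ht1 : 0 < t - 1 := by linarith
    have hμpos : 0 ≤ μ := hμ0
    have heq : -1/(t-1) = -(1/(t-1)) := by ring
    have hip2 : 1 + 1/(t-1) ≤ 1 - ∑ k, f i k * f j k := by linarith [hip, heq.symm.le, heq.le]
    have key : μ * (1 + 1/(t-1)) ≤ μ * (1 - ∑ k, f i k * f j k) :=
      mul_le_mul_of_nonneg_left hip2 hμpos
    have hμeq : μ * (1 + 1/(t-1)) = 2 := by
      rw [hμdef]
      field_simp
      ring
    have : 2 ≤ μ * (1 - ∑ k, f i k * f j k) := hμeq ▸ key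
    linarith
  refine ⟨hpsd, hdiag, hedge, ?_⟩
  have hmem : μ ∈ { μ : ℝ | 0 ≤ μ ∧ ∃ Y : Matrix V V ℝ, Y.PosSemidef ∧ (∀ i, Y i i = μ) ∧
      ∀ i j, G.Adj i j → (fun _ _ => (1:ℝ)) i j ≤ (1 / 4 : ℝ) * lapAdj Y i j } :=
    ⟨hμ0, Y, hpsd, hdiag, fun i j hij => hedge i j hij⟩
  have hbdd : BddBelow { μ : ℝ | 0 ≤ μ ∧ ∃ Y : Matrix V V ℝ, Y.PosSemidef ∧ (∀ i, Y i i = μ) ∧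
      ∀ i j, G.Adj i j → (fun _ _ => (1:ℝ)) i j ≤ (1 / 4 : ℝ) * lapAdj Y i j } :=
    ⟨0, fun x hx => hx.1⟩
  exact csInf_le hbdd hmem
end
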